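/- arXiv:1309.1632 — 5 statements merged into one kernel-verified Lean document; each statement's English description precedes it below -/
import Mathlib

section
/- Every finite simple graph G without isolated vertices has domination number γ(G) ≤ n/2, where n is the number of vertices. -/
open SimpleGraph Matrix

open Classical in
/-- The signless Laplacian matrix `Q(G) = D(G) + A(G)` of a simple graph. -/
noncomputable def signlessLaplacian {V : Type*} [Fintype V] (G : SimpleGraph V) : Matrix V V ℝ :=
  G.degMatrix ℝ + G.adjMatrix ℝ

open Classical in
/-- The least eigenvalue of the signless Laplacian. -/
noncomputable def qmin {V : Type*} [Fintype V] (G : SimpleGraph V) : ℝ :=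
  sInf (spectrum ℝ (signlessLaplacian G))

/-- A dominating set: every vertex outside `S` has a neighbor in `S`. -/
def IsDominatingSet {V : Type*} (G : SimpleGraph V) (S : Set V) : Prop :=
  ∀ v ∉ S, ∃ u ∈ S, G.Adj u v

/-- The domination number: minimum cardinality of a dominating set. -/
noncomputable def dominationNumber {V : Type*} [Fintype V] (G : SimpleGraph V) : ℕ :=
  sInf {k | ∃ S : Set V, IsDominatingSet G S ∧ S.ncard = k}

theorem dominationNumber_le_half {V : Type*} [Fintype V] (G : SimpleGraph V)
    (h : ∀ v : V, ∃ u, G.Adj v u) :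
    (dominationNumber G : ℝ) ≤ (Fintype.card V : ℝ) / 2 := by
  set K := {k | ∃ S : Set V, IsDominatingSet G S ∧ S.ncard = k} with hK
  have hne : K.Nonempty := ⟨(Set.univ : Set V).ncard, Set.univ, fun v hv => (hv trivial).elim, rfl⟩
  have hmem : dominationNumber G ∈ K := Nat.sInf_mem hne
  obtain ⟨D, hD, hDc⟩ := hmem
  -- Dᶜ is dominating
  have hcomp : IsDominatingSet G Dᶜ := by
    intro v hv
    simp only [Set.mem_compl_iff, not_not] at hv
    by_contra hno
    push_neg at hno
    -- all neighbors of v are in D; drop v from D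
    have hdom : IsDominatingSet G (D \ {v}) := by
      intro u hu
      by_cases huv : u = v
      · subst huv
        obtain ⟨w, hw⟩ := h u
        have hwD : w ∈ D := by
          by_contra hwD
          exact hno w hwD hw.symm
        exact ⟨w, ⟨hwD, fun hwv => G.irrefl (hwv ▸ hw)⟩, hw.symm⟩
      · have huD : u ∉ D := fun huD => hu ⟨huD, huv⟩
        obtain ⟨w, hwD, hwu⟩ := hD u huD
        have hwv : w ≠ v := by
          rintro rfl
          exact huD (by by_contra hc; exact hno u hc hwu.symm)
        exact ⟨w, ⟨hwD, hwv⟩, hwu⟩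
    have hlt : (D \ {v}).ncard < dominationNumber G := by
      rw [← hDc, Set.ncard_diff_singleton_of_mem hv]
      have hpos : 0 < D.ncard := (Set.ncard_pos (Set.toFinite D)).2 ⟨v, hv⟩
      omega
    have : dominationNumber G ≤ (D \ {v}).ncard := Nat.sInf_le ⟨D \ {v}, hdom, rfl⟩
    omega
  have hle : dominationNumber G ≤ (Dᶜ).ncard := Nat.sInf_le ⟨Dᶜ, hcomp, rfl⟩
  have hsum : D.ncard + (Dᶜ).ncard = Fintype.card V := by
    rw [Set.ncard_add_ncard_compl]
    exact Nat.card_eq_fintype_card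
  have : 2 * dominationNumber G ≤ Fintype.card V := by omega
  have h2 : (2:ℝ) * dominationNumber G ≤ Fintype.card V := by exact_mod_cast this
  linarith
end

section
/- Every connected non-bipartite finite simple graph G with domination number γ contains a non-bipartite unicyclic spanning subgraph H with γ(H) = γ. -/
open SimpleGraph Matrix

theorem exists_unicyclic_spanning_same_domination {V : Type*} [Fintype V] (G : SimpleGraph V)
    (hconn : G.Connected) (hnb : ¬ G.Colorable 2) :
    ∃ H : SimpleGraph V, H ≤ G ∧ H.Connected ∧
      H.edgeSet.ncard = Fintype.card V ∧ ¬ H.Colorable 2 ∧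
      dominationNumber H = dominationNumber G := by
  classical
  have hne : Nonempty V := hconn.nonempty
  -- a minimum dominating set of G
  have hAne : ({k | ∃ S : Set V, IsDominatingSet G S ∧ S.ncard = k}).Nonempty :=
    ⟨(Set.univ : Set V).ncard, Set.univ, fun v hv => absurd (Set.mem_univ v) hv, rfl⟩
  obtain ⟨S, hSdom, hScard⟩ := Nat.sInf_mem hAne
  choose f hfS hfadj using hSdom
  -- the "domination forest" F
  set F : SimpleGraph V :=
    SimpleGraph.fromEdgeSet {e | ∃ (v : V) (h : v ∉ S), e = s(v, f v h)} with hF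
  have hFadj : ∀ {a b : V}, F.Adj a b ↔
      ((∃ (h : a ∉ S), b = f a h) ∨ (∃ (h : b ∉ S), a = f b h)) := by
    intro a b
    rw [hF, fromEdgeSet_adj]
    constructor
    · rintro ⟨⟨v, hv, he⟩, hab⟩
      rw [Sym2.eq_iff] at he
      rcases he with ⟨rfl, h2⟩ | ⟨h1, rfl⟩
      · exact Or.inl ⟨hv, h2⟩
      · exact Or.inr ⟨hv, h1⟩
    · rintro (⟨h, rfl⟩ | ⟨h, rfl⟩)
      · exact ⟨⟨a, h, rfl⟩, fun hab => h (hab ▸ hfS a h)⟩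
      · exact ⟨⟨b, h, Sym2.eq_swap⟩, fun hab => h (hab ▸ hfS b h : b ∈ S)⟩
  have hFG : F ≤ G := by
    intro a b hab
    rcases hFadj.mp hab with ⟨h, rfl⟩ | ⟨h, rfl⟩
    · exact (hfadj a h).symm
    · exact hfadj b h
  have hFnbr : ∀ {a b : V} (ha : a ∉ S), F.Adj a b → b = f a ha := by
    intro a b ha hab
    rcases hFadj.mp hab with ⟨h, rfl⟩ | ⟨h, h1⟩
    · rfl
    · exact absurd (h1 ▸ hfS b h) ha
  -- F is acyclic
  have key : ∀ {a b : V} (_ : a ∉ S), F.Adj a b →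
      ¬ (F \ fromEdgeSet {s(a, b)}).Reachable a b := by
    rintro a b ha hab ⟨p⟩
    cases p with
    | nil => exact hab.ne rfl
    | @cons _ x _ h q =>
      rw [sdiff_adj] at h
      obtain ⟨hF1, hno⟩ := h
      have hx := hFnbr ha hF1
      have hb := hFnbr ha hab
      refine hno ?_
      rw [fromEdgeSet_adj]
      exact ⟨by simp [hx, hb], hF1.ne⟩
  have hFac : F.IsAcyclic := by
    rw [isAcyclic_iff_forall_adj_isBridge]
    intro v w hvw
    rcases hFadj.mp hvw with ⟨h, _⟩ | ⟨h, _⟩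
    · exact isBridge_iff.mpr (key h hvw)
    · rw [Sym2.eq_swap]
      exact isBridge_iff.mpr (key h hvw.symm)
  -- a maximal acyclic subgraph of G containing F
  set 𝒯 : Set (SimpleGraph V) := {T | F ≤ T ∧ T ≤ G ∧ T.IsAcyclic} with h𝒯
  set B : Set ℕ := {k | ∃ T ∈ 𝒯, T.edgeSet.ncard = k} with hB
  have hBne : B.Nonempty := ⟨F.edgeSet.ncard, F, ⟨le_refl F, hFG, hFac⟩, rfl⟩
  have hBbdd : BddAbove B := by
    refine ⟨G.edgeSet.ncard, ?_⟩
    rintro k ⟨T, ⟨_, hTG, _⟩, rfl⟩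
    exact Set.ncard_le_ncard (edgeSet_mono hTG) G.edgeSet.toFinite
  obtain ⟨T, hT𝒯, hTcard⟩ := Nat.sSup_mem hBne hBbdd
  obtain ⟨hFT, hTG, hTac⟩ := hT𝒯
  have hmax : ∀ T' ∈ 𝒯, T'.edgeSet.ncard ≤ T.edgeSet.ncard := by
    intro T' hT'
    rw [hTcard]
    exact le_csSup hBbdd ⟨T', hT', rfl⟩
  -- every edge of G joins T-reachable vertices
  have hreach : ∀ {v w : V}, G.Adj v w → T.Reachable v w := by
    intro v w hvw
    by_contra hnr
    have hnadj : ¬ T.Adj v w := fun h => hnr h.reachable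
    have hT'ac : (T ⊔ edge v w).IsAcyclic := by
      intro u c hc
      by_cases he : s(v, w) ∈ c.edges
      · have hrd := (adj_and_reachable_delete_edges_iff_exists_cycle.mpr ⟨u, c, hc, he⟩).2
        refine hnr (hrd.mono ?_)
        intro a b hab
        rw [deleteEdges, sdiff_adj] at hab
        obtain ⟨hab1, hab2⟩ := hab
        rw [sup_adj _ _ _ _, edge_adj] at hab1
        rcases hab1 with h | ⟨h1, h2⟩
        · exact h
        · rw [fromEdgeSet_adj] at hab2
          rcases h1 with ⟨rfl, rfl⟩ | ⟨rfl, rfl⟩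
          · exact absurd ⟨rfl, h2⟩ hab2
          · exact absurd ⟨Sym2.eq_swap, h2⟩ hab2
      · have hsub : ∀ e ∈ c.edges, e ∈ T.edgeSet := by
          intro e hec
          have hmem := c.edges_subset_edgeSet hec
          rw [edgeSet_sup] at hmem
          rcases hmem with h | h
          · exact h
          · rw [edge_edgeSet_of_ne hvw.ne] at h
            exact absurd (h ▸ hec) he
        exact hTac (c.transfer T hsub) (hc.transfer hsub)
    have hT'𝒯 : T ⊔ edge v w ∈ 𝒯 := by
      refine ⟨le_trans hFT le_sup_left, sup_le hTG ?_, hT'ac⟩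
      intro a b hab
      rw [edge_adj] at hab
      rcases hab.1 with ⟨rfl, rfl⟩ | ⟨rfl, rfl⟩
      · exact hvw
      · exact hvw.symm
    have hcard : (T ⊔ edge v w).edgeSet.ncard = T.edgeSet.ncard + 1 := by
      rw [Set.ncard_eq_toFinset_card', Set.ncard_eq_toFinset_card']
      exact T.card_edgeFinset_sup_edge hnadj hvw.ne
    have := hmax _ hT'𝒯
    omega
  -- T is a spanning tree of G
  have hTconn : T.Connected := by
    rw [connected_iff]
    refine ⟨fun u v => ?_, hne⟩
    obtain ⟨p⟩ := hconn u v
    induction p with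
    | nil => exact Reachable.refl _
    | cons h q ih => exact (hreach h).trans ih
  have hTtree : T.IsTree := ⟨hTconn, hTac⟩
  have hTn : T.edgeSet.ncard + 1 = Fintype.card V := by
    rw [Set.ncard_eq_toFinset_card']
    exact hTtree.card_edgeFinset
  -- in a tree, every path realizes the distance
  have hlen : ∀ {u v : V} (p : T.Walk u v), p.IsPath → p.length = T.dist u v := by
    intro u v p hp
    obtain ⟨q, hq, hql⟩ := hTconn.exists_path_of_dist u v
    have hpq : (⟨p, hp⟩ : T.Path u v) = ⟨q, hq⟩ := hTac.path_unique _ _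
    rw [← hql]
    exact congrArg Walk.length (congrArg Subtype.val hpq)
  obtain ⟨r⟩ := hne
  -- adjacent vertices in T have distances to r of different parity
  have hpar : ∀ {x y : V}, T.Adj x y → T.dist r x % 2 ≠ T.dist r y % 2 := by
    intro x y hxy
    obtain ⟨p, hp, hpl⟩ := hTconn.exists_path_of_dist r x
    by_cases hy : y ∈ p.support
    · have h1 : (p.takeUntil y hy).length = T.dist r y := hlen _ (hp.takeUntil hy)
      have h2 : (p.takeUntil y hy).length + (p.dropUntil y hy).length = p.length := by
        rw [← Walk.length_append, Walk.take_spec]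
      have h3 : (p.dropUntil y hy).length ≠ 0 :=
        fun h0 => hxy.ne' (Walk.eq_of_length_eq_zero h0)
      have h4 : T.dist r x ≤ T.dist r y + T.dist y x := hTconn.dist_triangle
      have h5 : T.dist y x = 1 := dist_eq_one_iff_adj.mpr hxy.symm
      omega
    · have hq : (p.concat hxy).IsPath := by
        rw [Walk.isPath_def, Walk.support_concat]
        simp [List.nodup_append, hp.support_nodup, hy]
        exact fun a ha hay => hy (hay ▸ ha)
      have h1 : (p.concat hxy).length = T.dist r y := hlen _ hq
      rw [Walk.length_concat, hpl] at h1
      omega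
  -- find a G-edge with equal parity
  have hodd : ∃ x y, G.Adj x y ∧ T.dist r x % 2 = T.dist r y % 2 := by
    by_contra hc
    push_neg at hc
    refine hnb ⟨Coloring.mk (fun v => (⟨T.dist r v % 2, Nat.mod_lt _ two_pos⟩ : Fin 2)) ?_⟩
    intro a b hab hEq
    exact hc a b hab (by simpa using congrArg Fin.val hEq)
  obtain ⟨x, y, hxy, hparxy⟩ := hodd
  have hxyne : x ≠ y := hxy.ne
  have hTnadj : ¬ T.Adj x y := fun h => hpar h hparxy
  -- the unicyclic graph H
  have hHG : T ⊔ edge x y ≤ G := by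
    refine sup_le hTG ?_
    intro a b hab
    rw [edge_adj] at hab
    rcases hab.1 with ⟨rfl, rfl⟩ | ⟨rfl, rfl⟩
    · exact hxy
    · exact hxy.symm
  have hTH : T ≤ T ⊔ edge x y := le_sup_left
  have hHconn : (T ⊔ edge x y).Connected := hTconn.mono hTH
  have hHcard : (T ⊔ edge x y).edgeSet.ncard = Fintype.card V := by
    rw [Set.ncard_eq_toFinset_card', ← hTn, Set.ncard_eq_toFinset_card']
    exact T.card_edgeFinset_sup_edge hTnadj hxyne
  -- H contains an odd closed walk
  obtain ⟨px, hpx, hpxl⟩ := hTconn.exists_path_of_dist r x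
  obtain ⟨py, hpy, hpyl⟩ := hTconn.exists_path_of_dist r y
  have hHadj : (T ⊔ edge x y).Adj x y :=
    (sup_adj T (edge x y) x y).mpr (Or.inr ((edge_adj x y x y).mpr ⟨Or.inl ⟨rfl, rfl⟩, hxyne⟩))
  have hwodd : Odd (Walk.cons hHadj ((py.reverse.append px).mapLe hTH)).length := by
    have : (Walk.cons hHadj ((py.reverse.append px).mapLe hTH)).length
        = (py.length + px.length) + 1 := by
      simp [Walk.mapLe, Walk.length_append]
    rw [this, Nat.odd_iff]
    omega
  have h3 := Walk.three_le_chromaticNumber_of_odd_loop _ hwodd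
  have hHnc : ¬ (T ⊔ edge x y).Colorable 2 := by
    intro hc
    have h2 := hc.chromaticNumber_le
    have : (3 : ℕ∞) ≤ 2 := le_trans h3 (by exact_mod_cast h2)
    norm_num at this
  -- domination number is preserved
  have hdomH : IsDominatingSet (T ⊔ edge x y) S := by
    intro v hv
    exact ⟨f v hv, hfS v hv, hTH (hFT (hFadj.mpr (Or.inr ⟨hv, rfl⟩)))⟩
  have h1 : dominationNumber (T ⊔ edge x y) ≤ dominationNumber G := by
    have : dominationNumber G = S.ncard := hScard.symm
    rw [this]
    exact Nat.sInf_le ⟨S, hdomH, rfl⟩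
  have h2 : dominationNumber G ≤ dominationNumber (T ⊔ edge x y) := by
    have hAHne : ({k | ∃ S : Set V, IsDominatingSet (T ⊔ edge x y) S ∧ S.ncard = k}).Nonempty :=
      ⟨(Set.univ : Set V).ncard, Set.univ, fun v hv => absurd (Set.mem_univ v) hv, rfl⟩
    obtain ⟨S', hS'dom, hS'⟩ := Nat.sInf_mem hAHne
    have hS'G : IsDominatingSet G S' := by
      intro v hv
      obtain ⟨u, hu1, hu2⟩ := hS'dom v hv
      exact ⟨u, hu1, hHG hu2⟩
    calc dominationNumber G ≤ S'.ncard := Nat.sInf_le ⟨S', hS'G, rfl⟩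
      _ = dominationNumber (T ⊔ edge x y) := hS'
  exact ⟨T ⊔ edge x y, hHG, hHconn, hHcard, hHnc, le_antisymm h1 h2⟩
end

section
/- Let x be an eigenvector of Q(G) for the least eigenvalue of a connected non-bipartite graph G, let T be a tree that is a branch of G rooted at u (i.e., G is the coalescence of T and another graph at u) with x nonzero on T. Then for any vertices p, q of T with q on the unique path in T from u to p and q ≠ p, one has |x(q)| < |x(p)|. -/
open SimpleGraph Matrix

set_option linter.unusedSectionVars false
set_option linter.unnecessarySeqFocus false
set_option maxHeartbeats 1000000

section Spectral
variable {V : Type*} [Fintype V] (G : SimpleGraph V)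

open Classical in
lemma sl_isHermitian : (signlessLaplacian G).IsHermitian := by
  classical
  rw [Matrix.IsHermitian, conjTranspose_eq_transpose_of_trivial]
  unfold signlessLaplacian
  rw [transpose_add]
  congr 1
  · exact isSymm_degMatrix (R := ℝ) (G := G)
  · exact isSymm_adjMatrix G

open Classical in
lemma qmin_le_eigenvalue [Nonempty V] (μ : ℝ) (hμ : μ ∈ spectrum ℝ (signlessLaplacian G)) :
    qmin G ≤ μ := by
  classical
  have h := Matrix.IsHermitian.spectrum_real_eq_range_eigenvalues (sl_isHermitian G)
  refine csInf_le ?_ hμ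
  rw [h]
  exact (Set.finite_range _).bddBelow

open Classical in
lemma sl_sub_qmin_posSemidef [Nonempty V] :
    (signlessLaplacian G - qmin G • 1).PosSemidef := by
  classical
  have hherm : (signlessLaplacian G - qmin G • 1).IsHermitian := by
    refine (sl_isHermitian G).sub ?_
    unfold Matrix.IsHermitian
    simp [conjTranspose_smul]
  have key : ∀ μ ∈ spectrum ℝ (signlessLaplacian G - qmin G • 1), 0 ≤ μ := by
    intro μ hμ
    have h2 : signlessLaplacian G - qmin G • 1
        = signlessLaplacian G - algebraMap ℝ (Matrix V V ℝ) (qmin G) := by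
      rw [Algebra.algebraMap_eq_smul_one]
    rw [h2, ← spectrum.sub_singleton_eq] at hμ
    obtain ⟨ν, hν, r, hr, rfl⟩ := Set.mem_sub.mp hμ
    have := qmin_le_eigenvalue G ν hν
    simp only [Set.mem_singleton_iff] at hr
    subst hr
    linarith
  exact (Matrix.IsHermitian.posSemidef_iff_eigenvalues_nonneg hherm).mpr fun i =>
    key _ (Matrix.IsHermitian.eigenvalues_mem_spectrum_real hherm i)

open Classical in
lemma rayleigh_lower [Nonempty V] (y : V → ℝ) :
    qmin G * (y ⬝ᵥ y) ≤ y ⬝ᵥ (signlessLaplacian G *ᵥ y) := by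
  classical
  have h := (sl_sub_qmin_posSemidef G).dotProduct_mulVec_nonneg y
  simp only [star_trivial, sub_mulVec, dotProduct_sub, smul_mulVec, one_mulVec,
    dotProduct_smul, smul_eq_mul] at h
  linarith

open Classical in
lemma rayleigh_eq_case [Nonempty V] (y : V → ℝ)
    (h : y ⬝ᵥ (signlessLaplacian G *ᵥ y) = qmin G * (y ⬝ᵥ y)) :
    signlessLaplacian G *ᵥ y = qmin G • y := by
  classical
  have h2 := ((sl_sub_qmin_posSemidef G).dotProduct_mulVec_zero_iff y).mp ?_
  · have := congrArg (fun M => M) h2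
    rw [sub_mulVec, smul_mulVec, one_mulVec, sub_eq_zero] at h2
    exact h2
  · simp only [star_trivial, sub_mulVec, dotProduct_sub, smul_mulVec, one_mulVec,
      dotProduct_smul, smul_eq_mul]
    rw [h]
    ring
end Spectral

section B
variable {V : Type*} [Fintype V] (G : SimpleGraph V)

open Classical in
lemma sl_mulVec_apply (y : V → ℝ) (v : V) :
    (signlessLaplacian G *ᵥ y) v
      = (G.degree v : ℝ) * y v + ∑ u ∈ G.neighborFinset v, y u := by
  classical
  unfold signlessLaplacian
  rw [add_mulVec, Pi.add_apply, degMatrix_mulVec_apply, adjMatrix_mulVec_apply]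

open Classical in
lemma qf_eq (y : V → ℝ) :
    y ⬝ᵥ (signlessLaplacian G *ᵥ y)
      = (∑ v, ∑ u, if G.Adj v u then (y v + y u)^2 else 0) / 2 := by
  classical
  have hdeg : ∀ v, (G.degree v : ℝ) = ∑ u, if G.Adj v u then (1:ℝ) else 0 := by
    intro v
    simp [SimpleGraph.degree, neighborFinset_eq_filter, Finset.sum_boole]
  have hnf : ∀ v, ∑ u ∈ G.neighborFinset v, y u = ∑ u, if G.Adj v u then y u else 0 := by
    intro v
    rw [neighborFinset_eq_filter, Finset.sum_filter]
  have lhs_eq : y ⬝ᵥ (signlessLaplacian G *ᵥ y)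
      = ∑ v, ∑ u, if G.Adj v u then (y v^2 + y v * y u) else 0 := by
    unfold dotProduct
    refine Finset.sum_congr rfl fun v _ => ?_
    rw [sl_mulVec_apply, hdeg, hnf, mul_add, Finset.sum_mul, Finset.mul_sum, Finset.mul_sum,
      ← Finset.sum_add_distrib]
    refine Finset.sum_congr rfl fun u _ => ?_
    by_cases h : G.Adj v u <;> simp [h] <;> ring
  have swap : ∑ v, ∑ u, (if G.Adj v u then (y u)^2 else 0)
      = ∑ v, ∑ u, (if G.Adj v u then (y v)^2 else 0) := by
    rw [Finset.sum_comm]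
    refine Finset.sum_congr rfl fun v _ => Finset.sum_congr rfl fun u _ => ?_
    rw [adj_comm]
  rw [lhs_eq, eq_div_iff (by norm_num : (2:ℝ) ≠ 0)]
  simp only [Finset.sum_mul]
  have step : ∀ v u, (if G.Adj v u then (y v^2 + y v * y u) else 0) * 2
      = (if G.Adj v u then (y v + y u)^2 else 0) + ((if G.Adj v u then (y v)^2 else 0)
          - (if G.Adj v u then (y u)^2 else 0)) := by
    intro v u
    by_cases h : G.Adj v u <;> simp [h] <;> ring
  simp only [step, Finset.sum_add_distrib, Finset.sum_sub_distrib, swap]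
  ring

lemma qf_nonneg (y : V → ℝ) : 0 ≤ y ⬝ᵥ (signlessLaplacian G *ᵥ y) := by
  classical
  rw [qf_eq]
  apply div_nonneg _ (by norm_num)
  refine Finset.sum_nonneg fun v _ => Finset.sum_nonneg fun u _ => ?_
  by_cases h : G.Adj v u <;> simp [h] <;> positivity
end B


section C
variable {V : Type*} [Fintype V] {G : SimpleGraph V}

lemma dotProduct_self_pos {x : V → ℝ} (hx0 : x ≠ 0) : 0 < x ⬝ᵥ x := by
  classical
  obtain ⟨v₀, hv₀⟩ := Function.ne_iff.mp hx0
  unfold dotProduct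
  refine Finset.sum_pos' (fun v _ => mul_self_nonneg _) ⟨v₀, Finset.mem_univ _, ?_⟩
  have h : x v₀ ≠ 0 := by simpa using hv₀
  exact mul_self_pos.mpr h

lemma qmin_pos (hconn : G.Connected) (hnb : ¬ G.Colorable 2) (x : V → ℝ) (hx0 : x ≠ 0)
    (hx : signlessLaplacian G *ᵥ x = qmin G • x) : 0 < qmin G := by
  classical
  haveI : Nonempty V := hconn.nonempty
  have hxx : 0 < x ⬝ᵥ x := dotProduct_self_pos hx0
  have hqf : x ⬝ᵥ (signlessLaplacian G *ᵥ x) = qmin G * (x ⬝ᵥ x) := by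
    rw [hx, dotProduct_smul, smul_eq_mul]
  have h0 : 0 ≤ qmin G := by nlinarith [qf_nonneg (G:=G) x]
  rcases h0.lt_or_eq with h | h
  · exact h
  exfalso
  have hz : x ⬝ᵥ (signlessLaplacian G *ᵥ x) = 0 := by rw [hqf, ← h]; ring
  rw [qf_eq] at hz
  have hz2 : (∑ v, ∑ u, if G.Adj v u then (x v + x u)^2 else 0) = 0 := by linarith
  have hedge : ∀ v u, G.Adj v u → x u = - x v := by
    have h1 := (Finset.sum_eq_zero_iff_of_nonneg (fun v _ => Finset.sum_nonneg
      (fun u _ => by by_cases h : G.Adj v u <;> simp [h] <;> positivity))).mp hz2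
    intro v u hadj
    have h2 := (Finset.sum_eq_zero_iff_of_nonneg
      (fun u _ => by by_cases h : G.Adj v u <;> simp [h] <;> positivity)).mp
      (h1 v (Finset.mem_univ v)) u (Finset.mem_univ u)
    rw [if_pos hadj] at h2
    have := pow_eq_zero_iff (n := 2) (by norm_num) |>.mp h2
    linarith
  have habs : ∀ v w : V, ∀ _ : G.Walk v w, |x v| = |x w| := by
    intro v w p
    induction p with
    | nil => rfl
    | cons h p ih =>
      rw [← ih]
      rw [hedge _ _ h, abs_neg]
  obtain ⟨v₀, hv₀⟩ := Function.ne_iff.mp hx0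
  have hv₀' : x v₀ ≠ 0 := by simpa using hv₀
  have hnz : ∀ v, x v ≠ 0 := by
    intro v
    have := habs v v₀ (hconn v v₀).some
    intro hv
    rw [hv, abs_zero] at this
    exact hv₀' (abs_eq_zero.mp this.symm)
  refine hnb ⟨SimpleGraph.Coloring.mk (fun v => if 0 < x v then 0 else 1) ?_⟩
  intro v w hadj
  have hvw := hedge v w hadj
  have hv := hnz v
  by_cases hpos : 0 < x v
  · have : ¬ 0 < x w := by rw [hvw]; linarith
    simp [hpos, this]
  · have : 0 < x w := by rw [hvw]; cases (hv.lt_or_gt) with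
      | inl h => linarith
      | inr h => exact absurd h hpos
    simp [hpos, this]
end C

namespace TreeAux
variable {W : Type*} [DecidableEq W] {Γ : SimpleGraph W} (ht : Γ.IsTree) (r : W)

/-- canonical path from the root `r` to `v` -/
noncomputable def pth (v : W) : Γ.Walk r v := (ht.existsUnique_path r v).choose

lemma pth_isPath (v : W) : (pth ht r v).IsPath := (ht.existsUnique_path r v).choose_spec.1

lemma pth_unique {v : W} (p : Γ.Walk r v) (hp : p.IsPath) : p = pth ht r v :=
  (ht.existsUnique_path r v).choose_spec.2 p hp

lemma pth_self : pth ht r r = Walk.nil := (pth_unique ht r Walk.nil (Walk.IsPath.nil)).symm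

/-- `Par a b` : `a` is the parent of `b` (with respect to root `r`). -/
def Par (a b : W) : Prop := ∃ hab : Γ.Adj a b, pth ht r b = (pth ht r a).concat hab

lemma Par.adj {a b : W} (h : Par ht r a b) : Γ.Adj a b := h.1

lemma isPath_concat {u v w : W} {p : Γ.Walk u v} (hp : p.IsPath) (h : Γ.Adj v w)
    (hw : w ∉ p.support) : (p.concat h).IsPath := by
  rw [Walk.isPath_def, Walk.support_concat]
  rw [List.nodup_append]
  exact ⟨hp.support_nodup, List.nodup_singleton w, by
    simp only [List.mem_singleton]; rintro a ha _ rfl rfl; exact hw ha⟩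

lemma par_of_not_mem_support {a b : W} (hadj : Γ.Adj a b) (hb : b ∉ (pth ht r a).support) :
    Par ht r a b :=
  ⟨hadj, (pth_unique ht r ((pth ht r a).concat hadj)
    (isPath_concat (pth_isPath ht r a) hadj hb)).symm⟩

lemma pth_takeUntil {v b : W} (hb : b ∈ (pth ht r v).support) :
    (pth ht r v).takeUntil b hb = pth ht r b :=
  pth_unique ht r _ ((pth_isPath ht r v).takeUntil hb)

lemma length_lt_of_mem_support {v b : W} (hb : b ∈ (pth ht r v).support) (hne : b ≠ v) :
    (pth ht r b).length < (pth ht r v).length := by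
  rw [← pth_takeUntil ht r hb]
  have h1 := (pth ht r v).length_takeUntil_le hb
  rcases h1.lt_or_eq with h | h
  · exact h
  · exfalso
    -- takeUntil has the same length as the path, so dropUntil is nil, so b = v
    have h2 := congr_arg Walk.length ((pth ht r v).take_spec hb)
    rw [Walk.length_append, h] at h2
    have h3 : ((pth ht r v).dropUntil b hb).length = 0 := by omega
    have h4 := Walk.nil_iff_length_eq.mpr h3
    exact hne h4.eq

lemma par_or_par (a b : W) (hadj : Γ.Adj a b) : Par ht r a b ∨ Par ht r b a := by
  by_cases hb : b ∈ (pth ht r a).support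
  · by_cases ha : a ∈ (pth ht r b).support
    · exfalso
      have h1 := length_lt_of_mem_support ht r hb hadj.ne'
      have h2 := length_lt_of_mem_support ht r ha hadj.ne
      omega
    · exact Or.inr (par_of_not_mem_support ht r hadj.symm ha)
  · exact Or.inl (par_of_not_mem_support ht r hadj hb)

lemma Par.not_mem_support {a b : W} (h : Par ht r a b) : b ∉ (pth ht r a).support := by
  obtain ⟨hab, heq⟩ := h
  have hp := pth_isPath ht r b
  rw [heq, Walk.isPath_def, Walk.support_concat,
    List.nodup_append] at hp
  intro hmem
  exact hp.2.2 b hmem b (by simp) rfl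

lemma Par.ne_root {a b : W} (h : Par ht r a b) : b ≠ r := by
  obtain ⟨hab, heq⟩ := h
  intro hb
  subst hb
  rw [pth_self] at heq
  exact Walk.concat_ne_nil _ _ heq.symm

lemma Par.unique {a a' b : W} (h : Par ht r a b) (h' : Par ht r a' b) : a = a' := by
  obtain ⟨hab, heq⟩ := h
  obtain ⟨hab', heq'⟩ := h'
  obtain ⟨hv, _⟩ := Walk.concat_inj (heq.symm.trans heq')
  exact hv

lemma exists_par {b : W} (hb : b ≠ r) : ∃ a, Par ht r a b := by
  have hnn : ¬ (pth ht r b).Nil := Walk.not_nil_of_ne (fun h => hb h.symm)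
  have hnn' : ¬ (pth ht r b).reverse.Nil := by
    rwa [Walk.nil_iff_length_eq, Walk.length_reverse, ← Walk.nil_iff_length_eq]
  obtain ⟨y, h, t, ht'⟩ := Walk.not_nil_iff.mp hnn'
  refine ⟨y, h.symm, ?_⟩
  have : pth ht r b = t.reverse.concat h.symm := by
    have := congr_arg Walk.reverse ht'
    rw [Walk.reverse_reverse, Walk.reverse_cons, ← Walk.concat_eq_append] at this
    exact this
  rw [this]
  congr 1
  apply pth_unique
  have hp : (pth ht r b).IsPath := pth_isPath ht r b
  rw [this] at hp
  rw [Walk.isPath_def, Walk.support_concat, List.nodup_append] at hp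
  exact Walk.isPath_def _ |>.mpr hp.1

/-- the subtree (away from root) at `b`: all vertices whose root-path passes through `b`. -/
def Sub (b : W) : Set W := {v | b ∈ (pth ht r v).support}

lemma mem_Sub_self (b : W) : b ∈ Sub ht r b := Walk.end_mem_support _

lemma root_not_mem_Sub {b : W} (hb : b ≠ r) : r ∉ Sub ht r b := by
  intro h
  rw [Sub, Set.mem_setOf_eq] at h
  rw [pth_self ht r] at h
  simp [Walk.support_nil] at h
  exact hb h

lemma mem_Sub_mono {c v : W} (hv : v ∈ Sub ht r c) :
    (pth ht r c).support ⊆ (pth ht r v).support := by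
  rw [Sub, Set.mem_setOf_eq] at hv
  rw [← pth_takeUntil ht r hv]
  exact Walk.support_takeUntil_subset _ hv

lemma crossing {b v w : W} (hb : b ≠ r) (hadj : Γ.Adj v w)
    (hv : v ∈ Sub ht r b) (hw : w ∉ Sub ht r b) : v = b ∧ Par ht r w b := by
  rcases par_or_par ht r v w hadj with h | h
  · exfalso
    obtain ⟨h1, h2⟩ := h
    apply hw
    rw [Sub, Set.mem_setOf_eq, h2, Walk.support_concat]
    exact List.mem_append_left _ hv
  · obtain ⟨h1, h2⟩ := h
    have hb' : b ∈ ((pth ht r w).concat h1).support := h2 ▸ hv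
    rw [Walk.support_concat, List.mem_append] at hb'
    rcases hb' with hb' | hb'
    · exfalso
      exact hw hb'
    · simp only [List.mem_singleton] at hb'
      subst hb'
      exact ⟨rfl, ⟨h1, h2⟩⟩

lemma Par.mem_support {b c : W} (h : Par ht r b c) : b ∈ (pth ht r c).support := by
  obtain ⟨h1, h2⟩ := h
  rw [h2, Walk.support_concat]
  exact List.mem_append_left _ (Walk.end_mem_support _)

lemma Par.sub_subset {b c : W} (h : Par ht r b c) : Sub ht r c ⊆ Sub ht r b := by
  intro v hv
  exact mem_Sub_mono ht r hv (h.mem_support ht r)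

lemma Par.not_mem_sub {b c : W} (h : Par ht r b c) : b ∉ Sub ht r c := by
  intro hmem
  exact (h.not_mem_support ht r) hmem

lemma Par.sub_ssubset {b c : W} (h : Par ht r b c) : Sub ht r c ⊂ Sub ht r b :=
  ⟨h.sub_subset ht r, fun hsub => (h.not_mem_sub ht r) (hsub (mem_Sub_self ht r b))⟩

lemma Par.length_lt {b c : W} (h : Par ht r b c) :
    (pth ht r b).length < (pth ht r c).length := by
  obtain ⟨h1, h2⟩ := h
  rw [h2, Walk.length_concat]
  omega

lemma not_par_both {a b : W} (h : Par ht r a b) (h' : Par ht r b a) : False := by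
  have := h.length_lt ht r
  have := h'.length_lt ht r
  omega

/-- decomposition: any vertex of the subtree at `b` other than `b` lies in the
subtree of some child `c` of `b`. -/
lemma sub_decomp {b v : W} (hv : v ∈ Sub ht r b) (hvb : v ≠ b) :
    ∃ c, Par ht r b c ∧ v ∈ Sub ht r c := by
  rw [Sub, Set.mem_setOf_eq] at hv
  set P := pth ht r v with hP
  have hdropnn : ¬ (P.dropUntil b hv).Nil := Walk.not_nil_of_ne (fun h => hvb h.symm)
  set c := (P.dropUntil b hv).getVert 1 with hc
  have hadj : Γ.Adj b c := Walk.adj_snd hdropnn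
  have hcmem : c ∈ (P.dropUntil b hv).support.tail := by
    have := Walk.cons_support_tail hdropnn
    have h2 : c ∈ (P.dropUntil b hv).tail.support := Walk.start_mem_support _
    rw [← this]
    simpa using h2
  have hcP : c ∈ P.support := by
    have := Walk.support_dropUntil_subset P hv
    exact this (List.mem_of_mem_tail hcmem)
  have hcnottake : c ∉ (P.takeUntil b hv).support := by
    have hnodup : P.support.Nodup := (pth_isPath ht r v).support_nodup
    have hspec := P.take_spec hv
    have := congr_arg Walk.support hspec
    rw [Walk.support_append] at this
    rw [← this] at hnodup
    rw [List.nodup_append] at hnodup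
    intro hmem
    exact hnodup.2.2 c hmem c hcmem rfl
  refine ⟨c, ?_, hcP⟩
  rcases par_or_par ht r b c hadj with h | h
  · exact h
  · exfalso
    apply hcnottake
    rw [pth_takeUntil ht r hv]
    exact h.mem_support ht r

end TreeAux

section Bridge
variable {V : Type*} [Fintype V] {G : SimpleGraph V} {T H : G.Subgraph} {u : V}

lemma adj_bridge (hunion : T ⊔ H = ⊤) (hinter : T.verts ∩ H.verts = {u})
    {v w : V} (hvT : v ∈ T.verts) (hvu : v ≠ u) : G.Adj v w ↔ T.Adj v w := by
  constructor
  · intro h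
    have htop : (⊤ : G.Subgraph).Adj v w := (Subgraph.top_adj).mpr h
    rw [← hunion, Subgraph.sup_adj] at htop
    rcases htop with h' | h'
    · exact h'
    · exfalso
      have hvH : v ∈ H.verts := h'.fst_mem
      have : v ∈ T.verts ∩ H.verts := ⟨hvT, hvH⟩
      rw [hinter] at this
      exact hvu this
  · exact fun h => h.adj_sub

open Classical in
lemma sum_neighborFinset_eq (G : SimpleGraph V) (v : V) (f : V → ℝ) :
    ∑ w ∈ G.neighborFinset v, f w = ∑ w, if G.Adj v w then f w else 0 := by
  classical
  rw [neighborFinset_eq_filter, Finset.sum_filter]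

open Classical in
lemma degree_eq_sum (G : SimpleGraph V) (v : V) :
    (G.degree v : ℝ) = ∑ w, if G.Adj v w then (1:ℝ) else 0 := by
  classical
  simp [SimpleGraph.degree, neighborFinset_eq_filter, Finset.sum_boole]

open Classical in
lemma sl_mulVec_apply' (G : SimpleGraph V) (y : V → ℝ) (v : V) :
    (signlessLaplacian G *ᵥ y) v
      = (G.degree v : ℝ) * y v + ∑ u ∈ G.neighborFinset v, y u := by
  classical
  unfold signlessLaplacian
  rw [add_mulVec, Pi.add_apply, degMatrix_mulVec_apply, adjMatrix_mulVec_apply]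

open Classical in
lemma eigen_eq {x : V → ℝ} (hx : (signlessLaplacian G).mulVec x = qmin G • x)
    (hunion : T ⊔ H = ⊤) (hinter : T.verts ∩ H.verts = {u})
    (b : V) (hbT : b ∈ T.verts) (hbu : b ≠ u) :
    (qmin G - ∑ w, if T.Adj b w then (1:ℝ) else 0) * x b
      = ∑ w, if T.Adj b w then x w else 0 := by
  classical
  have h1 : (signlessLaplacian G *ᵥ x) b = qmin G * x b := by
    rw [hx]; simp
  rw [sl_mulVec_apply', sum_neighborFinset_eq, degree_eq_sum] at h1
  have hadj : ∀ w, G.Adj b w ↔ T.Adj b w := fun w => adj_bridge hunion hinter hbT hbu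
  have e1 : ∑ w, (if G.Adj b w then (1:ℝ) else 0) = ∑ w, if T.Adj b w then (1:ℝ) else 0 :=
    Finset.sum_congr rfl fun w _ => by rw [hadj w]
  have e2 : ∑ w, (if G.Adj b w then x w else 0) = ∑ w, if T.Adj b w then x w else 0 :=
    Finset.sum_congr rfl fun w _ => by rw [hadj w]
  rw [e1, e2] at h1
  rw [sub_mul]
  linarith

open Classical in
lemma sl_apply_ne {v w : V} (hne : v ≠ w) :
    signlessLaplacian G v w = if G.Adj v w then 1 else 0 := by
  classical
  unfold signlessLaplacian
  rw [Matrix.add_apply]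
  rw [degMatrix]
  rw [Matrix.diagonal_apply_ne _ hne]
  simp [SimpleGraph.adjMatrix]

lemma dotProduct_mulVec_double (M : Matrix V V ℝ) (z : V → ℝ) :
    z ⬝ᵥ (M *ᵥ z) = ∑ v, ∑ w, M v w * z v * z w := by
  unfold dotProduct mulVec dotProduct
  refine Finset.sum_congr rfl fun v _ => ?_
  rw [Finset.mul_sum]
  exact Finset.sum_congr rfl fun w _ => by ring

lemma mulVec_apply_sum (M : Matrix V V ℝ) (z : V → ℝ) (v : V) :
    (M *ᵥ z) v = ∑ w, M v w * z w := rfl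
end Bridge


section Flip
variable {V : Type*} [Fintype V] {G : SimpleGraph V} {T H : G.Subgraph} {u : V} {x : V → ℝ}

open Classical TreeAux in
lemma flip_lemma [Nonempty V] (hu : u ∈ T.verts)
    (hx : (signlessLaplacian G).mulVec x = qmin G • x)
    (hunion : T ⊔ H = ⊤) (hinter : T.verts ∩ H.verts = {u}) (htree : T.coe.IsTree)
    (b a : T.verts) (hbr : b ≠ ⟨u, hu⟩) (hpar : TreeAux.Par htree ⟨u, hu⟩ a b) :
    x ↑a * x ↑b ≤ 0 ∧ (x ↑a * x ↑b = 0 → x ↑b = 0) := by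
  classical
  set r : T.verts := ⟨u, hu⟩ with hr
  set S : Set V := Subtype.val '' (TreeAux.Sub htree r b) with hS
  have hSb : (↑b : V) ∈ S := ⟨b, TreeAux.mem_Sub_self htree r b, rfl⟩
  have haS : (↑a : V) ∉ S := by
    rintro ⟨w', hw', heq⟩
    have : w' = a := Subtype.val_injective heq
    subst this
    exact (hpar.not_mem_sub htree r) hw'
  have hmemS : ∀ v ∈ S, ∃ hvT : v ∈ T.verts, v ≠ u ∧ (⟨v, hvT⟩ : T.verts) ∈ Sub htree r b := by
    rintro v ⟨v', hv', rfl⟩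
    refine ⟨v'.2, ?_, by simpa using hv'⟩
    intro hvu
    have : v' = r := Subtype.ext hvu
    subst this
    exact (TreeAux.root_not_mem_Sub htree r hbr) hv'
  have crossG : ∀ v w : V, G.Adj v w → v ∈ S → w ∉ S → v = (↑b : V) ∧ w = (↑a : V) := by
    intro v w hadj hvS hwS
    obtain ⟨hvT, hvu, hv'⟩ := hmemS v hvS
    have hT : T.Adj v w := (adj_bridge hunion hinter hvT hvu).mp hadj
    have hwT : w ∈ T.verts := hT.snd_mem
    have hwSub : (⟨w, hwT⟩ : T.verts) ∉ Sub htree r b := by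
      intro hmem
      exact hwS ⟨⟨w, hwT⟩, hmem, rfl⟩
    have hΓ : T.coe.Adj ⟨v, hvT⟩ ⟨w, hwT⟩ := hT
    obtain ⟨heq, hparw⟩ := TreeAux.crossing htree r hbr hΓ hv' hwSub
    have : (⟨w, hwT⟩ : T.verts) = a := hparw.unique htree r hpar |>.symm ▸ rfl
    · constructor
      · exact congrArg Subtype.val heq
      · exact congrArg Subtype.val (hparw.unique htree r hpar)
  have hGab : G.Adj ↑a ↑b := T.coe_adj_sub _ _ hpar.adj
  have hne : (↑a : V) ≠ (↑b : V) := hGab.ne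
  set Q := signlessLaplacian G with hQ
  set y : V → ℝ := fun v => if v ∈ S then -x v else x v with hy
  have hyy : y ⬝ᵥ y = x ⬝ᵥ x := by
    unfold dotProduct
    refine Finset.sum_congr rfl fun v _ => ?_
    by_cases h : v ∈ S <;> simp [hy, h]
  have hQab : Q ↑a ↑b = 1 := by rw [hQ, sl_apply_ne hne, if_pos hGab]
  have hQba : Q ↑b ↑a = 1 := by rw [hQ, sl_apply_ne (Ne.symm hne), if_pos hGab.symm]
  -- quadratic form difference
  set f : V → V → ℝ := fun v w => Q v w * y v * y w - Q v w * x v * x w with hf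
  have hf0 : ∀ v w : V, ¬(v = ↑b ∧ w = ↑a) → ¬(v = ↑a ∧ w = ↑b) → f v w = 0 := by
    intro v w h1 h2
    by_cases hvS : v ∈ S <;> by_cases hwS : w ∈ S
    · simp only [hf, hy, if_pos hvS, if_pos hwS]; ring
    · by_cases hadj : G.Adj v w
      · exact absurd (crossG v w hadj hvS hwS) h1
      · have hvw : v ≠ w := fun h => hwS (h ▸ hvS)
        simp only [hf, hQ, sl_apply_ne hvw, if_neg hadj]; ring
    · by_cases hadj : G.Adj v w
      · obtain ⟨h3, h4⟩ := crossG w v hadj.symm hwS hvS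
        exact absurd ⟨h4, h3⟩ h2
      · have hvw : v ≠ w := fun h => hvS (h ▸ hwS)
        simp only [hf, hQ, sl_apply_ne hvw, if_neg hadj]; ring
    · simp only [hf, hy, if_neg hvS, if_neg hwS]; ring
  have hsum : ∑ v, ∑ w, f v w = f ↑b ↑a + f ↑a ↑b := by
    have hga : ∑ w, f ↑a w = f ↑a ↑b :=
      Finset.sum_eq_single _ (fun w _ hw => hf0 _ _ (fun h => hne h.1) (fun h => hw h.2))
        (fun h => absurd (Finset.mem_univ _) h)
    have hgb : ∑ w, f ↑b w = f ↑b ↑a :=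
      Finset.sum_eq_single _ (fun w _ hw => hf0 _ _ (fun h => hw h.2) (fun h => hne.symm h.1))
        (fun h => absurd (Finset.mem_univ _) h)
    have hg0 : ∀ v : V, v ≠ ↑a → v ≠ ↑b → ∑ w, f v w = 0 := by
      intro v hva hvb
      exact Finset.sum_eq_zero fun w _ => hf0 _ _ (fun h => hvb h.1) (fun h => hva h.1)
    have : ∑ v, ∑ w, f v w = ∑ v ∈ ({↑a, ↑b} : Finset V), ∑ w, f v w := by
      refine (Finset.sum_subset (Finset.subset_univ _) ?_).symm
      intro v _ hv
      simp only [Finset.mem_insert, Finset.mem_singleton] at hv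
      push_neg at hv
      exact hg0 v hv.1 hv.2
    rw [this, Finset.sum_pair hne, hga, hgb]
    ring
  have hfba : f ↑b ↑a = -2 * (x ↑a * x ↑b) := by
    simp only [hf, hy, if_pos hSb, if_neg haS, hQba]; ring
  have hfab : f ↑a ↑b = -2 * (x ↑a * x ↑b) := by
    simp only [hf, hy, if_pos hSb, if_neg haS, hQab]; ring
  have hqfy : y ⬝ᵥ (Q *ᵥ y) = x ⬝ᵥ (Q *ᵥ x) - 4 * (x ↑a * x ↑b) := by
    have h1 := dotProduct_mulVec_double Q y
    have h2 := dotProduct_mulVec_double Q x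
    have h3 : y ⬝ᵥ (Q *ᵥ y) - x ⬝ᵥ (Q *ᵥ x) = ∑ v, ∑ w, f v w := by
      rw [h1, h2, ← Finset.sum_sub_distrib]
      refine Finset.sum_congr rfl fun v _ => ?_
      rw [← Finset.sum_sub_distrib]
    rw [hsum, hfba, hfab] at h3
    linarith
  have hqfx : x ⬝ᵥ (Q *ᵥ x) = qmin G * (x ⬝ᵥ x) := by
    rw [hQ, hx, dotProduct_smul, smul_eq_mul]
  have hlow := rayleigh_lower G y
  rw [hqfy, hqfx, hyy] at hlow
  have hconc1 : x ↑a * x ↑b ≤ 0 := by linarith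
  refine ⟨hconc1, fun heq0 => ?_⟩
  -- equality case
  have heq : y ⬝ᵥ (Q *ᵥ y) = qmin G * (y ⬝ᵥ y) := by
    rw [hqfy, hqfx, hyy, heq0]; ring
  have heig := rayleigh_eq_case G y heq
  set z : V → ℝ := fun v => x v - y v with hz
  have hQz : Q *ᵥ z = qmin G • z := by
    have : z = x - y := rfl
    rw [this, mulVec_sub, hx, heig, ← smul_sub]
  have hzval : ∀ v, z v = if v ∈ S then 2 * x v else 0 := by
    intro v
    by_cases h : v ∈ S <;> simp [hz, hy, h] <;> ring
  have hevala : (Q *ᵥ z) ↑a = 0 := by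
    rw [hQz]
    simp only [Pi.smul_apply, smul_eq_mul, hzval, if_neg haS, mul_zero]
  rw [mulVec_apply_sum] at hevala
  have hsingle : ∑ w, Q ↑a w * z w = Q ↑a ↑b * z ↑b := by
    refine Finset.sum_eq_single _ ?_ (fun h => absurd (Finset.mem_univ _) h)
    intro w _ hw
    by_cases hwS : w ∈ S
    · by_cases hadj : G.Adj ↑a w
      · obtain ⟨h3, _⟩ := crossG w ↑a hadj.symm hwS haS
        exact absurd h3 hw
      · have : (↑a : V) ≠ w := fun h => haS (h ▸ hwS)
        rw [hQ, sl_apply_ne this, if_neg hadj]; ring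
    · rw [hzval, if_neg hwS]; ring
  rw [hsingle, hQab, hzval, if_pos hSb] at hevala
  linarith
end Flip

section Main
variable {V : Type*} [Fintype V] {G : SimpleGraph V} {T H : G.Subgraph} {u : V} {x : V → ℝ}

open Classical TreeAux in
lemma zero_prop [Nonempty V] (hu : u ∈ T.verts)
    (hx : (signlessLaplacian G).mulVec x = qmin G • x)
    (hunion : T ⊔ H = ⊤) (hinter : T.verts ∩ H.verts = {u}) (htree : T.coe.IsTree)
    (b a : T.verts) (hbr : b ≠ ⟨u, hu⟩) (hpar : Par htree ⟨u, hu⟩ a b)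
    (hzero : ∀ v ∈ Sub htree ⟨u, hu⟩ b, x ↑v = 0) : x ↑a = 0 := by
  classical
  set r : T.verts := ⟨u, hu⟩ with hr
  have hbu : (↑b : V) ≠ u := fun h => hbr (Subtype.ext h)
  have heq := eigen_eq hx hunion hinter ↑b b.2 hbu
  have hxb : x ↑b = 0 := hzero b (mem_Sub_self htree r b)
  have hTba : T.Adj ↑b ↑a := (TreeAux.Par.adj htree r hpar).symm
  have hsingle : ∑ w, (if T.Adj ↑b w then x w else 0) = x ↑a := by
    rw [Finset.sum_eq_single (↑a : V)]
    · rw [if_pos hTba]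
    · intro w _ hw
      by_cases hT : T.Adj ↑b w
      · rw [if_pos hT]
        have hwT : w ∈ T.verts := hT.snd_mem
        have hΓ : T.coe.Adj b ⟨w, hwT⟩ := hT
        rcases par_or_par htree r b ⟨w, hwT⟩ hΓ with h | h
        · exact hzero _ (h.sub_subset htree r (mem_Sub_self htree r _))
        · exact absurd (congrArg Subtype.val (h.unique htree r hpar)) hw
      · rw [if_neg hT]
    · exact fun h => absurd (Finset.mem_univ _) h
  rw [hsingle, hxb, mul_zero] at heq
  exact heq.symm

open Classical TreeAux in
lemma main_ind [Nonempty V] (hu : u ∈ T.verts)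
    (hx : (signlessLaplacian G).mulVec x = qmin G • x)
    (hunion : T ⊔ H = ⊤) (hinter : T.verts ∩ H.verts = {u}) (htree : T.coe.IsTree)
    (hqpos : 0 < qmin G) :
    ∀ n : ℕ, ∀ b : T.verts, b ≠ ⟨u, hu⟩ → (Sub htree ⟨u, hu⟩ b).ncard ≤ n →
      ((x ↑b = 0 → ∀ v ∈ Sub htree ⟨u, hu⟩ b, x ↑v = 0) ∧
       (∀ a : T.verts, Par htree ⟨u, hu⟩ a b → x ↑b ≠ 0 →
          x ↑a * x ↑b < 0 ∧ |x ↑a| < |x ↑b|)) := by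
  classical
  set r : T.verts := ⟨u, hu⟩ with hr
  intro n
  induction n with
  | zero =>
    intro b hbr hcard
    exfalso
    have h1 : (Sub htree r b).ncard = 0 := Nat.le_zero.mp hcard
    have h2 := (Set.ncard_eq_zero (Set.toFinite _)).mp h1
    exact absurd (h2 ▸ mem_Sub_self htree r b) (Set.notMem_empty b)
  | succ n IHn =>
    intro b hbr hcard
    have IH : ∀ c : T.verts, Par htree r b c →
        ((x ↑c = 0 → ∀ v ∈ Sub htree r c, x ↑v = 0) ∧
         (∀ a : T.verts, Par htree r a c → x ↑c ≠ 0 →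
            x ↑a * x ↑c < 0 ∧ |x ↑a| < |x ↑c|)) := by
      intro c hc
      refine IHn c (hc.ne_root htree r) ?_
      have hlt : (Sub htree r c).ncard < (Sub htree r b).ncard :=
        Set.ncard_lt_ncard (hc.sub_ssubset htree r) (Set.toFinite _)
      omega
    constructor
    · intro hxb v hv
      by_cases hvb : v = b
      · exact hvb ▸ hxb
      · obtain ⟨c, hc, hvc⟩ := sub_decomp htree r hv hvb
        have hxc : x ↑c = 0 := by
          by_contra hxc
          have := ((IH c hc).2 b hc hxc).1
          rw [hxb] at this
          simp at this
        exact (IH c hc).1 hxc v hvc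
    · intro a hpar hxb
      have hbu : (↑b : V) ≠ u := fun h => hbr (Subtype.ext h)
      -- children all have nonzero eigenvector entries
      have hchild : ∀ c : T.verts, Par htree r b c → x ↑c ≠ 0 := by
        intro c hc hxc
        exact hxb (zero_prop hu hx hunion hinter htree c b (hc.ne_root htree r) hc
          ((IH c hc).1 hxc))
      have hcb : ∀ c : T.verts, Par htree r b c → x ↑b * x ↑c < 0 ∧ |x ↑b| < |x ↑c| :=
        fun c hc => (IH c hc).2 b hc (hchild c hc)
      -- lift to V-level
      have hlift : ∀ w : V, T.Adj ↑b w → w ≠ ↑a →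
          x w * x ↑b ≤ -(x ↑b)^2 := by
        intro w hT hwa
        have hwT : w ∈ T.verts := hT.snd_mem
        have hΓ : T.coe.Adj b ⟨w, hwT⟩ := hT
        have hParbw : Par htree r b ⟨w, hwT⟩ := by
          rcases par_or_par htree r b ⟨w, hwT⟩ hΓ with h | h
          · exact h
          · exact absurd (congrArg Subtype.val (h.unique htree r hpar)) hwa
        obtain ⟨h1, h2⟩ := hcb _ hParbw
        have hneg : x w * x ↑b < 0 := by rw [mul_comm] at h1; exact h1
        have habs : |x ↑b| * |x ↑b| ≤ |x w| * |x ↑b| :=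
          mul_le_mul_of_nonneg_right h2.le (abs_nonneg _)
        rw [abs_mul_abs_self] at habs
        rw [← abs_mul, abs_of_neg hneg] at habs
        linarith
      -- the eigen-equation at b
      have heq := eigen_eq hx hunion hinter ↑b b.2 hbu
      have hTba : T.Adj ↑b ↑a := (TreeAux.Par.adj htree r hpar).symm
      have haU : (↑a : V) ∈ Finset.univ := Finset.mem_univ _
      set A' : ℝ := ∑ w ∈ Finset.univ.erase ↑a, (if T.Adj ↑b w then x w else 0) with hA'
      set d' : ℝ := ∑ w ∈ Finset.univ.erase ↑a, (if T.Adj ↑b w then (1:ℝ) else 0) with hd'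
      have hsplitA : ∑ w, (if T.Adj ↑b w then x w else 0) = x ↑a + A' := by
        have h := Finset.add_sum_erase Finset.univ (fun w => if T.Adj ↑b w then x w else 0) haU
        simp only [if_pos hTba] at h
        exact h.symm
      have hsplitd : ∑ w, (if T.Adj ↑b w then (1:ℝ) else 0) = 1 + d' := by
        have h := Finset.add_sum_erase Finset.univ (fun w => if T.Adj ↑b w then (1:ℝ) else 0) haU
        simp only [if_pos hTba] at h
        exact h.symm
      have hd'0 : 0 ≤ d' := Finset.sum_nonneg fun w _ => by positivity
      have hA'bound : A' * x ↑b ≤ d' * (-(x ↑b)^2) := by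
        rw [hA', hd', Finset.sum_mul, Finset.sum_mul]
        refine Finset.sum_le_sum fun w hw => ?_
        have hwa : w ≠ ↑a := (Finset.mem_erase.mp hw).1
        by_cases hT : T.Adj ↑b w
        · rw [if_pos hT, if_pos hT, one_mul]
          exact hlift w hT hwa
        · rw [if_neg hT, if_neg hT, zero_mul, zero_mul]
      rw [hsplitd, hsplitA] at heq
      -- multiply the eigen-equation by x b
      have hkey : (qmin G - (1 + d')) * (x ↑b)^2 = x ↑a * x ↑b + A' * x ↑b := by
        have := congrArg (· * x ↑b) heq
        rw [add_mul] at this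
        nlinarith [this]
      have hxb2 : 0 < (x ↑b)^2 := by positivity
      have hlower : (qmin G - 1) * (x ↑b)^2 ≤ x ↑a * x ↑b := by nlinarith
      obtain ⟨hle, heqc⟩ := flip_lemma hu hx hunion hinter htree b a hbr hpar
      have hlt : x ↑a * x ↑b < 0 := by
        rcases hle.lt_or_eq with h | h
        · exact h
        · exact absurd (heqc h) hxb
      refine ⟨hlt, ?_⟩
      have h1 : -(x ↑a * x ↑b) < (x ↑b)^2 := by nlinarith
      have h2 : |x ↑a| * |x ↑b| = -(x ↑a * x ↑b) := by
        rw [← abs_mul, abs_of_neg hlt]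
      have h3 : |x ↑a| * |x ↑b| < |x ↑b| * |x ↑b| := by
        rw [h2]
        calc -(x ↑a * x ↑b) < (x ↑b)^2 := h1
          _ = |x ↑b| * |x ↑b| := by rw [pow_two, ← abs_mul_abs_self]
      have hxbpos : 0 < |x ↑b| := abs_pos.mpr hxb
      exact lt_of_mul_lt_mul_right h3 (abs_nonneg _)
end Main
section Final
variable {V : Type*} [Fintype V] {G : SimpleGraph V} {T H : G.Subgraph} {u : V} {x : V → ℝ}

open Classical TreeAux in
lemma x_root_ne [Nonempty V] (hu : u ∈ T.verts)
    (hx : (signlessLaplacian G).mulVec x = qmin G • x)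
    (hunion : T ⊔ H = ⊤) (hinter : T.verts ∩ H.verts = {u}) (htree : T.coe.IsTree)
    (hqpos : 0 < qmin G) :
    ∀ n : ℕ, ∀ b : T.verts, (pth htree ⟨u, hu⟩ b).length ≤ n → x ↑b ≠ 0 →
      x u ≠ 0 := by
  classical
  set r : T.verts := ⟨u, hu⟩ with hr
  intro n
  induction n with
  | zero =>
    intro b hlen hxb
    have : (pth htree r b).Nil := Walk.nil_iff_length_eq.mpr (Nat.le_zero.mp hlen)
    have hbr : b = r := this.eq.symm  -- pth : Walk r b, Nil gives r = b
    rwa [hbr] at hxb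
  | succ n IHn =>
    intro b hlen hxb
    by_cases hbr : b = r
    · rwa [hbr] at hxb
    · obtain ⟨a, hpar⟩ := exists_par htree r hbr
      have hmain := (main_ind hu hx hunion hinter htree hqpos
        (Sub htree r b).ncard b hbr le_rfl).2 a hpar hxb
      have hxa : x ↑a ≠ 0 := by
        intro h0
        rw [h0, zero_mul] at hmain
        exact lt_irrefl 0 hmain.1
      have := hpar.length_lt htree r
      exact IHn a (by omega) hxa

open Classical TreeAux in
lemma x_all_ne [Nonempty V] (hu : u ∈ T.verts)
    (hx : (signlessLaplacian G).mulVec x = qmin G • x)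
    (hunion : T ⊔ H = ⊤) (hinter : T.verts ∩ H.verts = {u}) (htree : T.coe.IsTree)
    (hqpos : 0 < qmin G) (hxu : x u ≠ 0) :
    ∀ n : ℕ, ∀ b : T.verts, (pth htree ⟨u, hu⟩ b).length ≤ n → x ↑b ≠ 0 := by
  classical
  set r : T.verts := ⟨u, hu⟩ with hr
  intro n
  induction n with
  | zero =>
    intro b hlen
    have : (pth htree r b).Nil := Walk.nil_iff_length_eq.mpr (Nat.le_zero.mp hlen)
    have hbr : b = r := this.eq.symm
    rwa [hbr]
  | succ n IHn =>
    intro b hlen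
    by_cases hbr : b = r
    · rwa [hbr]
    · obtain ⟨a, hpar⟩ := exists_par htree r hbr
      have hlt := hpar.length_lt htree r
      have hxa : x ↑a ≠ 0 := IHn a (by omega)
      intro hxb
      apply hxa
      exact zero_prop hu hx hunion hinter htree b a hbr hpar
        ((main_ind hu hx hunion hinter htree hqpos
          (Sub htree r b).ncard b hbr le_rfl).1 hxb)

open Classical TreeAux in
lemma x_mono [Nonempty V] (hu : u ∈ T.verts)
    (hx : (signlessLaplacian G).mulVec x = qmin G • x)
    (hunion : T ⊔ H = ⊤) (hinter : T.verts ∩ H.verts = {u}) (htree : T.coe.IsTree)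
    (hqpos : 0 < qmin G) (hxu : x u ≠ 0) :
    ∀ n : ℕ, ∀ b : T.verts, (pth htree ⟨u, hu⟩ b).length ≤ n →
      ∀ q : T.verts, q ∈ (pth htree ⟨u, hu⟩ b).support → q ≠ b → |x ↑q| < |x ↑b| := by
  classical
  set r : T.verts := ⟨u, hu⟩ with hr
  intro n
  induction n with
  | zero =>
    intro b hlen q hq hqb
    exfalso
    have : (pth htree r b).Nil := Walk.nil_iff_length_eq.mpr (Nat.le_zero.mp hlen)
    have hbr : b = r := this.eq.symm
    subst hbr
    rw [pth_self htree] at hq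
    simp [Walk.support_nil] at hq
    exact hqb hq
  | succ n IHn =>
    intro b hlen q hq hqb
    by_cases hbr : b = r
    · exfalso
      subst hbr
      rw [pth_self htree] at hq
      simp [Walk.support_nil] at hq
      exact hqb hq
    · obtain ⟨a, hpar⟩ := exists_par htree r hbr
      have hxb : x ↑b ≠ 0 := x_all_ne hu hx hunion hinter htree hqpos hxu
        (pth htree r b).length b le_rfl
      have hmain := (main_ind hu hx hunion hinter htree hqpos
        (Sub htree r b).ncard b hbr le_rfl).2 a hpar hxb
      have hab : |x ↑a| < |x ↑b| := hmain.2
      have hlt := hpar.length_lt htree r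
      obtain ⟨hadj, hconcat⟩ := hpar
      rw [hconcat, Walk.support_concat, List.mem_append] at hq
      rcases hq with hq | hq
      · by_cases hqa : q = a
        · subst hqa; exact hab
        · exact (IHn a (by omega) q hq hqa).trans hab
      · simp only [List.mem_singleton] at hq
        exact absurd hq hqb
end Final

theorem tree_branch_strict_increase {V : Type*} [Fintype V] (G : SimpleGraph V)
    (hconn : G.Connected) (hnb : ¬ G.Colorable 2)
    (x : V → ℝ) (hx0 : x ≠ 0)
    (hx : (signlessLaplacian G).mulVec x = qmin G • x)
    (T H : G.Subgraph) (u : V) (hu : u ∈ T.verts)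
    (hunion : T ⊔ H = ⊤) (hinter : T.verts ∩ H.verts = {u})
    (hTnt : 1 < T.verts.ncard) (hHnt : 1 < H.verts.ncard)
    (htree : T.coe.IsTree)
    (hnz : ∃ v ∈ T.verts, x v ≠ 0)
    (p q : T.verts) (w : T.coe.Walk ⟨u, hu⟩ p) (hw : w.IsPath)
    (hq : q ∈ w.support) (hqp : q ≠ p) :
    |x ↑q| < |x ↑p| := by
  classical
  haveI : Nonempty V := hconn.nonempty
  have hqpos : 0 < qmin G := qmin_pos hconn hnb x hx0 hx
  have hxu : x u ≠ 0 := by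
    obtain ⟨v, hvT, hv⟩ := hnz
    exact x_root_ne hu hx hunion hinter htree hqpos
      (TreeAux.pth htree ⟨u, hu⟩ ⟨v, hvT⟩).length ⟨v, hvT⟩ le_rfl hv
  have hwp : w = TreeAux.pth htree ⟨u, hu⟩ p := TreeAux.pth_unique htree ⟨u, hu⟩ w hw
  refine x_mono hu hx hunion hinter htree hqpos hxu
    (TreeAux.pth htree ⟨u, hu⟩ p).length p le_rfl q ?_ hqp
  rw [← hwp]
  exact hq
end

section
/- Let G₁ be a connected graph containing distinct vertices v₁, v₂, and G₂ a connected bipartite graph containing a vertex u. Let G be the coalescence of G₁ at v₂ with G₂ at u, and G* the coalescence of G₁ at v₁ with G₂ at u. If some eigenvector x of Q(G) for the least eigenvalue satisfies |x(v₁)| ≥ |x(v₂)|, then q_min(G*) ≤ q_min(G). -/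
open SimpleGraph Matrix

/-- The coalescence `G₁(v) ⋄ G₂(u)`: disjoint copies of `G₁` and `G₂` with `v` identified
with `u` (the vertex `u` of `G₂` is deleted, and `v` takes over its adjacencies). -/
def coalescence {V₁ V₂ : Type*} (G₁ : SimpleGraph V₁) (G₂ : SimpleGraph V₂) (v : V₁) (u : V₂) :
    SimpleGraph (V₁ ⊕ {w : V₂ // w ≠ u}) where
  Adj a b :=
    match a, b with
    | Sum.inl a, Sum.inl b => G₁.Adj a b
    | Sum.inl a, Sum.inr b => a = v ∧ G₂.Adj u b.1
    | Sum.inr a, Sum.inl b => b = v ∧ G₂.Adj u a.1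
    | Sum.inr a, Sum.inr b => G₂.Adj a.1 b.1
  symm := by
    constructor
    rintro (a | a) (b | b) h
    · exact G₁.adj_symm h
    · exact h
    · exact h
    · exact G₂.adj_symm h
  loopless := by
    constructor
    rintro (a | a) h
    · exact G₁.irrefl h
    · exact G₂.irrefl h

lemma posSemidef_sub_smul_one {n : Type*} [Fintype n] [DecidableEq n] (M : Matrix n n ℝ)
    (hM : M.IsHermitian) {c : ℝ} (hc : ∀ i, c ≤ hM.eigenvalues i) : (M - c • 1).PosSemidef := by
  have hU : (hM.eigenvectorUnitary : Matrix n n ℝ) *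
      star (hM.eigenvectorUnitary : Matrix n n ℝ) = 1 :=
    (Matrix.mem_unitaryGroup_iff).mp hM.eigenvectorUnitary.2
  have h1 : M - c • 1 =
      (hM.eigenvectorUnitary : Matrix n n ℝ) * Matrix.diagonal (fun i => hM.eigenvalues i - c) *
        ((hM.eigenvectorUnitary : Matrix n n ℝ))ᴴ := by
    have h2 : c • (1 : Matrix n n ℝ) =
        (hM.eigenvectorUnitary : Matrix n n ℝ) * (c • 1) *
          star (hM.eigenvectorUnitary : Matrix n n ℝ) := by
      rw [Matrix.mul_smul, mul_one, Matrix.smul_mul, hU]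
    rw [← Matrix.star_eq_conjTranspose]
    nth_rewrite 1 [hM.spectral_theorem]
    rw [Unitary.conjStarAlgAut_apply]
    rw [h2, ← Matrix.sub_mul, ← Matrix.mul_sub]
    congr 2
    ext i j
    by_cases h : i = j <;> simp [h, Matrix.one_apply, Matrix.diagonal]
  rw [h1]
  exact (Matrix.posSemidef_diagonal_iff.mpr
    fun i => sub_nonneg.mpr (hc i)).mul_mul_conjTranspose_same _

open Classical in
lemma signlessLaplacian_isHermitian {V : Type*} [Fintype V] (G : SimpleGraph V) :
    (signlessLaplacian G).IsHermitian := by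
  unfold signlessLaplacian
  rw [Matrix.IsHermitian, Matrix.conjTranspose_eq_transpose_of_trivial, Matrix.transpose_add,
    Matrix.IsSymm.eq (G.isSymm_degMatrix (R := ℝ)), Matrix.IsSymm.eq (G.isSymm_adjMatrix (α := ℝ))]

open Classical in
lemma qform_eq {V : Type*} [Fintype V] (G : SimpleGraph V) (x : V → ℝ) :
    x ⬝ᵥ (signlessLaplacian G *ᵥ x) =
      (∑ i : V, ∑ j : V, if G.Adj i j then (x i + x j)^2 else 0) / 2 := by
  simp_rw [signlessLaplacian, Matrix.add_mulVec, dotProduct_add,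
    G.dotProduct_mulVec_degMatrix, G.dotProduct_mulVec_adjMatrix,
    degree_eq_sum_if_adj, Finset.sum_mul, ite_mul, one_mul, zero_mul, ← Finset.sum_add_distrib,
    ite_add_ite, add_zero]
  rw [← add_self_div_two (∑ i : V, ∑ j : V, _)]
  conv_lhs => enter [1, 2, 2, i, 2, j]; rw [if_congr (G.adj_comm i j) rfl rfl]
  conv_lhs => enter [1, 2]; rw [Finset.sum_comm]
  simp_rw [← Finset.sum_add_distrib, ite_add_ite]
  congr 2 with i
  congr 2 with j
  ring_nf

lemma qmin_mul_le {V : Type*} [Fintype V] (G : SimpleGraph V) (y : V → ℝ) :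
    qmin G * (y ⬝ᵥ y) ≤ y ⬝ᵥ (signlessLaplacian G *ᵥ y) := by
  classical
  set M := signlessLaplacian G with hMdef
  have hM : M.IsHermitian := signlessLaplacian_isHermitian G
  have hspec : spectrum ℝ M = Set.range hM.eigenvalues := hM.spectrum_real_eq_range_eigenvalues
  have hc : ∀ i, qmin G ≤ hM.eigenvalues i := by
    intro i
    refine csInf_le ?_ ?_
    · rw [hspec]; exact (Set.finite_range _).bddBelow
    · rw [hspec]; exact ⟨i, rfl⟩
  have hpsd := (posSemidef_sub_smul_one M hM hc).dotProduct_mulVec_nonneg y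
  rw [star_trivial, Matrix.sub_mulVec, dotProduct_sub, Matrix.smul_mulVec,
    Matrix.one_mulVec, dotProduct_smul, smul_eq_mul, sub_nonneg] at hpsd
  exact hpsd

open Classical in
lemma coalescence_form {V₁ V₂ : Type*} [Fintype V₁] [Fintype V₂] [DecidableEq V₂]
    (G₁ : SimpleGraph V₁) (G₂ : SimpleGraph V₂) (v : V₁) (u : V₂)
    (z : V₁ ⊕ {w : V₂ // w ≠ u} → ℝ) :
    (∑ i, ∑ j, if (coalescence G₁ G₂ v u).Adj i j then (z i + z j)^2 else 0)
    = (∑ a : V₁, ∑ b : V₁, if G₁.Adj a b then (z (Sum.inl a) + z (Sum.inl b))^2 else 0)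
    + 2 * (∑ b : {w : V₂ // w ≠ u}, if G₂.Adj u b.1
        then (z (Sum.inl v) + z (Sum.inr b))^2 else 0)
    + (∑ a : {w : V₂ // w ≠ u}, ∑ b : {w : V₂ // w ≠ u}, if G₂.Adj a.1 b.1
        then (z (Sum.inr a) + z (Sum.inr b))^2 else 0) := by
  have hll : ∀ a b, (coalescence G₁ G₂ v u).Adj (Sum.inl a) (Sum.inl b) ↔ G₁.Adj a b :=
    fun _ _ => Iff.rfl
  have hlr : ∀ a b, (coalescence G₁ G₂ v u).Adj (Sum.inl a) (Sum.inr b) ↔ a = v ∧ G₂.Adj u b.1 :=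
    fun _ _ => Iff.rfl
  have hrl : ∀ a b, (coalescence G₁ G₂ v u).Adj (Sum.inr a) (Sum.inl b) ↔ b = v ∧ G₂.Adj u a.1 :=
    fun _ _ => Iff.rfl
  have hrr : ∀ a b, (coalescence G₁ G₂ v u).Adj (Sum.inr a) (Sum.inr b) ↔ G₂.Adj a.1 b.1 :=
    fun _ _ => Iff.rfl
  rw [Fintype.sum_sum_type]
  simp_rw [Fintype.sum_sum_type, hll, hlr, hrl, hrr, ite_and, Finset.sum_ite_irrel,
    Finset.sum_const_zero, Finset.sum_ite_eq', Finset.mem_univ, if_true]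
  have h2 : ∀ a : {w : V₂ // w ≠ u}, (if G₂.Adj u a.1 then (z (Sum.inr a) + z (Sum.inl v))^2 else 0)
      = (if G₂.Adj u a.1 then (z (Sum.inl v) + z (Sum.inr a))^2 else 0) := by
    intro a
    by_cases h : G₂.Adj u a.1 <;> simp [h]
    ring
  simp_rw [h2]
  rw [Finset.sum_add_distrib, Finset.sum_add_distrib]
  simp only [Finset.sum_ite_eq', Finset.mem_univ, if_true]
  ring

set_option maxHeartbeats 1000000 in
open Classical in
theorem qmin_relocate_bipartite_branch {V₁ V₂ : Type*} [Fintype V₁] [Fintype V₂]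
    [DecidableEq V₂]
    (G₁ : SimpleGraph V₁) (G₂ : SimpleGraph V₂)
    (v₁ v₂ : V₁) (hne : v₁ ≠ v₂) (u : V₂)
    (hG₁ : G₁.Connected) (hG₂ : G₂.Connected) (hbip : G₂.Colorable 2)
    (x : V₁ ⊕ {w : V₂ // w ≠ u} → ℝ) (hx0 : x ≠ 0)
    (hx : (signlessLaplacian (coalescence G₁ G₂ v₂ u)).mulVec x =
      qmin (coalescence G₁ G₂ v₂ u) • x)
    (habs : |x (Sum.inl v₂)| ≤ |x (Sum.inl v₁)|) :
    qmin (coalescence G₁ G₂ v₁ u) ≤ qmin (coalescence G₁ G₂ v₂ u) := by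
  classical
  obtain ⟨C⟩ := hbip
  set σ : V₂ → ℝ := fun w => if C w = C u then 1 else -1 with hσdef
  have key : ∀ p q r : Fin 2, p ≠ q → ((p = r) ↔ ¬(q = r)) := by decide
  have hσsq : ∀ w, σ w ^ 2 = 1 := by
    intro w; by_cases h : C w = C u <;> simp [hσdef, h]
  have hσadj : ∀ a b : V₂, G₂.Adj a b → σ a = -σ b := by
    intro a b hab
    have hne2 := C.valid hab
    have hiff : (C a = C u) ↔ ¬(C b = C u) := key _ _ _ hne2
    by_cases h : C b = C u
    · have h' : ¬ (C a = C u) := by simp [hiff, h]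
      simp [hσdef, h, h']
    · have h' : C a = C u := hiff.mpr h
      simp [hσdef, h, h']
  have hσu : ∀ b : V₂, G₂.Adj u b → σ b = -1 := by
    intro b hb
    have := hσadj u b hb
    have hu : σ u = 1 := by simp [hσdef]
    have hb' := hσadj b u (G₂.adj_symm hb)
    rw [hu] at hb'
    exact hb'
  set xv₁ := x (Sum.inl v₁) with hxv₁
  set xv₂ := x (Sum.inl v₂) with hxv₂
  set T : ℝ := ∑ b : {w : V₂ // w ≠ u}, σ b.1 * x (Sum.inr b) with hT
  set n : ℝ := (Fintype.card {w : V₂ // w ≠ u} : ℝ) with hn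
  have hn0 : 0 ≤ n := Nat.cast_nonneg _
  obtain ⟨ε, hε2, hnn⟩ : ∃ ε : ℝ, ε ^ 2 = 1 ∧
      0 ≤ 2 * ε * (xv₁ - ε * xv₂) * T + n * (xv₁ - ε * xv₂) ^ 2 := by
    have hsq : xv₂ ^ 2 ≤ xv₁ ^ 2 := by
      rw [← sq_abs xv₁, ← sq_abs xv₂]
      exact pow_le_pow_left₀ (abs_nonneg _) habs 2
    by_contra hcon
    push_neg at hcon
    have h1 := hcon 1 (one_pow 2)
    have h2 := hcon (-1) (by norm_num)
    have k1 : 0 ≤ n * (xv₁ - xv₂) ^ 2 := mul_nonneg hn0 (sq_nonneg _)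
    have k2 : 0 ≤ n * (xv₁ + xv₂) ^ 2 := mul_nonneg hn0 (sq_nonneg _)
    have a1 : (xv₁ - xv₂) * T < 0 := by nlinarith
    have a2 : 0 < (xv₁ + xv₂) * T := by nlinarith
    nlinarith [mul_neg_of_neg_of_pos a1 a2, sq_nonneg T, mul_nonneg (sub_nonneg.mpr hsq) (sq_nonneg T)]
  set δ : ℝ := xv₁ - ε * xv₂ with hδ
  set y : V₁ ⊕ {w : V₂ // w ≠ u} → ℝ :=
    Sum.elim (fun w => x (Sum.inl w)) (fun b => ε * x (Sum.inr b) + σ b.1 * δ) with hy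
  -- quadratic form equality
  have hform :
      (∑ i, ∑ j, if (coalescence G₁ G₂ v₁ u).Adj i j then (y i + y j)^2 else 0)
      = (∑ i, ∑ j, if (coalescence G₁ G₂ v₂ u).Adj i j then (x i + x j)^2 else 0) := by
    rw [coalescence_form, coalescence_form]
    have e1 : (∑ a : V₁, ∑ b : V₁, if G₁.Adj a b then (y (Sum.inl a) + y (Sum.inl b))^2 else 0)
        = ∑ a : V₁, ∑ b : V₁, if G₁.Adj a b then (x (Sum.inl a) + x (Sum.inl b))^2 else 0 := by
      simp [hy]
    have e2 : (∑ b : {w : V₂ // w ≠ u}, if G₂.Adj u b.1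
          then (y (Sum.inl v₁) + y (Sum.inr b))^2 else 0)
        = ∑ b : {w : V₂ // w ≠ u}, if G₂.Adj u b.1
          then (x (Sum.inl v₂) + x (Sum.inr b))^2 else 0 := by
      refine Finset.sum_congr rfl fun b _ => ?_
      by_cases h : G₂.Adj u b.1
      · rw [if_pos h, if_pos h]
        have hb := hσu b.1 h
        have hval : y (Sum.inl v₁) + y (Sum.inr b) = ε * (x (Sum.inl v₂) + x (Sum.inr b)) := by
          simp only [hy, Sum.elim_inl, Sum.elim_inr, hb, hδ, ← hxv₁, ← hxv₂]
          ring
        rw [hval, mul_pow, hε2, one_mul]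
      · rw [if_neg h, if_neg h]
    have e3 : (∑ a : {w : V₂ // w ≠ u}, ∑ b : {w : V₂ // w ≠ u}, if G₂.Adj a.1 b.1
          then (y (Sum.inr a) + y (Sum.inr b))^2 else 0)
        = ∑ a : {w : V₂ // w ≠ u}, ∑ b : {w : V₂ // w ≠ u}, if G₂.Adj a.1 b.1
          then (x (Sum.inr a) + x (Sum.inr b))^2 else 0 := by
      refine Finset.sum_congr rfl fun a _ => Finset.sum_congr rfl fun b _ => ?_
      by_cases h : G₂.Adj a.1 b.1
      · rw [if_pos h, if_pos h]
        have hab := hσadj a.1 b.1 h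
        have hval : y (Sum.inr a) + y (Sum.inr b) = ε * (x (Sum.inr a) + x (Sum.inr b)) := by
          simp only [hy, Sum.elim_inr, hab]
          ring
        rw [hval, mul_pow, hε2, one_mul]
      · rw [if_neg h, if_neg h]
    rw [e1, e2, e3]
  -- norm inequality
  have hnorm : x ⬝ᵥ x ≤ y ⬝ᵥ y := by
    rw [dotProduct, dotProduct, Fintype.sum_sum_type, Fintype.sum_sum_type]
    have e1 : (∑ a : V₁, y (Sum.inl a) * y (Sum.inl a))
        = ∑ a : V₁, x (Sum.inl a) * x (Sum.inl a) := by simp [hy]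
    rw [e1]
    have e2 : (∑ b : {w : V₂ // w ≠ u}, y (Sum.inr b) * y (Sum.inr b))
        = (∑ b : {w : V₂ // w ≠ u}, x (Sum.inr b) * x (Sum.inr b))
          + (2 * ε * δ * T + n * δ ^ 2) := by
      have expand : ∀ b : {w : V₂ // w ≠ u}, y (Sum.inr b) * y (Sum.inr b)
          = x (Sum.inr b) * x (Sum.inr b) + ((2 * ε * δ) * (σ b.1 * x (Sum.inr b)) + δ ^ 2) := by
        intro b
        have h1 := hσsq b.1
        simp only [hy, Sum.elim_inr]
        nlinarith [hε2, h1]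
      rw [Finset.sum_congr rfl fun b _ => expand b, Finset.sum_add_distrib,
        Finset.sum_add_distrib, ← Finset.mul_sum, ← hT, Finset.sum_const, Finset.card_univ,
        nsmul_eq_mul, ← hn]
    rw [e2]
    have : 0 ≤ 2 * ε * δ * T + n * δ ^ 2 := hnn
    linarith
  -- assemble
  have hxx : 0 < x ⬝ᵥ x := by
    have hnn2 : 0 ≤ x ⬝ᵥ x := Finset.sum_nonneg fun i _ => mul_self_nonneg (x i)
    rcases lt_or_eq_of_le hnn2 with h | h
    · exact h
    · exact absurd (dotProduct_self_eq_zero.mp h.symm) hx0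
  have hyy : 0 < y ⬝ᵥ y := lt_of_lt_of_le hxx hnorm
  have hxQx : x ⬝ᵥ (signlessLaplacian (coalescence G₁ G₂ v₂ u) *ᵥ x)
      = qmin (coalescence G₁ G₂ v₂ u) * (x ⬝ᵥ x) := by
    rw [hx, dotProduct_smul, smul_eq_mul]
  have hq0 : 0 ≤ qmin (coalescence G₁ G₂ v₂ u) := by
    have h1 : 0 ≤ x ⬝ᵥ (signlessLaplacian (coalescence G₁ G₂ v₂ u) *ᵥ x) := by
      rw [qform_eq]
      apply div_nonneg _ (by norm_num)
      refine Finset.sum_nonneg fun i _ => Finset.sum_nonneg fun j _ => ?_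
      split
      · positivity
      · exact le_refl 0
    rw [hxQx] at h1
    nlinarith [h1, hxx]
  have hchain : qmin (coalescence G₁ G₂ v₁ u) * (y ⬝ᵥ y)
      ≤ qmin (coalescence G₁ G₂ v₂ u) * (y ⬝ᵥ y) := by
    calc qmin (coalescence G₁ G₂ v₁ u) * (y ⬝ᵥ y)
        ≤ y ⬝ᵥ (signlessLaplacian (coalescence G₁ G₂ v₁ u) *ᵥ y) := qmin_mul_le _ y
      _ = (∑ i, ∑ j, if (coalescence G₁ G₂ v₁ u).Adj i j then (y i + y j)^2 else 0) / 2 :=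
          qform_eq _ y
      _ = (∑ i, ∑ j, if (coalescence G₁ G₂ v₂ u).Adj i j then (x i + x j)^2 else 0) / 2 := by
          rw [hform]
      _ = x ⬝ᵥ (signlessLaplacian (coalescence G₁ G₂ v₂ u) *ᵥ x) := (qform_eq _ x).symm
      _ = qmin (coalescence G₁ G₂ v₂ u) * (x ⬝ᵥ x) := hxQx
      _ ≤ qmin (coalescence G₁ G₂ v₂ u) * (y ⬝ᵥ y) := by
          exact mul_le_mul_of_nonneg_left hnorm hq0
  exact le_of_mul_le_mul_right hchain hyy
end

section
/- For every connected graph G of order n with at least one odd cycle and every minimum dominating set U of G with |U| = γ ≥ 2, there exists a spanning tree T of the bipartite subgraph structure such that adding a single edge of G to T yields a connected non-bipartite unicyclic spanning subgraph of G. -/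
open SimpleGraph Matrix

section AuxSpanningTree
open SimpleGraph Walk

variable {V : Type*}

private lemma aux_reach {G : SimpleGraph V} {v w : V}
    (h : (G \ fromEdgeSet {s(v, w)}).Reachable v w) :
    ∀ {x y : V} (_ : G.Walk x y), (G \ fromEdgeSet {s(v, w)}).Reachable x y := by
  intro x y p
  induction p with
  | nil => exact Reachable.refl _
  | @cons a b c hadj p ih =>
    refine Reachable.trans ?_ ih
    by_cases he : s(a, b) = s(v, w)
    · rw [Sym2.eq_iff] at he
      rcases he with ⟨rfl, rfl⟩ | ⟨rfl, rfl⟩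
      · exact h
      · exact h.symm
    · exact Adj.reachable (by rw [sdiff_adj]; exact ⟨hadj, by simp [fromEdgeSet_adj, he]⟩)

private lemma aux_tree [Fintype V] :
    ∀ (n : ℕ) (G : SimpleGraph V), G.edgeSet.ncard ≤ n → G.Connected →
      ∃ T ≤ G, T.IsTree := by
  intro n
  induction n using Nat.strong_induction_on with
  | _ n ih =>
    intro G hn hconn
    by_cases hac : G.IsAcyclic
    · exact ⟨G, le_refl _, hconn, hac⟩
    · simp only [IsAcyclic, not_forall, not_not] at hac
      obtain ⟨u, c, hc⟩ := hac
      cases c with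
      | nil => exact absurd hc (IsCycle.not_of_nil)
      | @cons _ b _ hadj p =>
        have hmem : s(u, b) ∈ (Walk.cons hadj p).edges := by
          rw [Walk.edges_cons]; exact List.mem_cons_self
        have hreach : (G \ fromEdgeSet {s(u, b)}).Reachable u b :=
          (adj_and_reachable_delete_edges_iff_exists_cycle.mpr
            ⟨u, Walk.cons hadj p, hc, hmem⟩).2
        set G' := G \ fromEdgeSet {s(u, b)} with hG'
        have hle' : G' ≤ G := sdiff_le
        have hconn' : G'.Connected := by
          have : Nonempty V := hconn.nonempty
          exact Connected.mk fun x y =>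
            (hconn.preconnected x y).elim fun pw => aux_reach hreach pw
        have hnotmem : s(u, b) ∉ G'.edgeSet := by
          rw [G'.mem_edgeSet, sdiff_adj]
          rintro ⟨-, h2⟩
          exact h2 (by simp [fromEdgeSet_adj, hadj.ne])
        have hss : G'.edgeSet ⊂ G.edgeSet :=
          ⟨edgeSet_mono hle', fun hsub => hnotmem (hsub (G.mem_edgeSet.mpr hadj))⟩
        have hlt : G'.edgeSet.ncard < G.edgeSet.ncard :=
          Set.ncard_lt_ncard hss (Set.toFinite _)
        have hlt' : G'.edgeSet.ncard < n := lt_of_lt_of_le hlt hn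
        obtain ⟨T, hT, hTt⟩ := ih _ hlt' G' (le_refl _) hconn'
        exact ⟨T, le_trans hT hle', hTt⟩

private lemma aux_parity {G : SimpleGraph V} (c : G.Coloring (Fin 2)) :
    ∀ {a b : V} (p : G.Walk a b), (c a = c b ↔ Even p.length) := by
  intro a b p
  induction p with
  | nil => simp
  | @cons a b' b hadj p ih =>
    have hne : c a ≠ c b' := c.valid hadj
    have key : ∀ x y z : Fin 2, x ≠ y → (x = z ↔ ¬ y = z) := by decide
    rw [Walk.length_cons, Nat.even_add_one, ← ih]
    exact key _ _ _ hne

private lemma aux_tree_coloring {G : SimpleGraph V} (hG : G.IsTree) :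
    Nonempty (G.Coloring (Fin 2)) := by
  classical
  obtain ⟨r⟩ := hG.isConnected.nonempty
  choose P hP hPu using fun v => hG.existsUnique_path v r
  have key : ∀ {x y : V}, G.Adj x y →
      (P x).length = (P y).length + 1 ∨ (P y).length = (P x).length + 1 := by
    intro x y hadj
    by_cases hy : y ∈ (P x).support
    · left
      have hdrop : ((P x).dropUntil y hy).IsPath := (hP x).dropUntil hy
      have htake : ((P x).takeUntil y hy).IsPath := (hP x).takeUntil hy
      have h1 : (P x).takeUntil y hy = (Path.singleton hadj : G.Path x y).1 := by
        have := hG.IsAcyclic.path_unique ⟨(P x).takeUntil y hy, htake⟩ (Path.singleton hadj)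
        exact congrArg Subtype.val this
      have h2 : (P x).dropUntil y hy = P y := hPu y _ hdrop
      have h3 : (((P x).takeUntil y hy).append ((P x).dropUntil y hy)) = P x :=
        (P x).take_spec hy
      have := congrArg Walk.length h3
      rw [Walk.length_append, h1, h2] at this
      simp only [Path.singleton, Walk.length_cons, Walk.length_nil] at this
      omega
    · right
      have hq : (Walk.cons hadj.symm (P x)).IsPath :=
        (Walk.cons_isPath_iff _ _).mpr ⟨hP x, hy⟩
      have := hPu y _ hq
      have := congrArg Walk.length this.symm
      rw [Walk.length_cons] at this
      omega
  refine ⟨Coloring.mk (fun v => if Even (P v).length then 0 else 1) ?_⟩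
  intro x y hadj
  rcases key hadj with h | h
  · by_cases he : Even (P y).length <;> simp [h, Nat.even_add_one, he]
  · by_cases he : Even (P x).length <;> simp [h, Nat.even_add_one, he]

end AuxSpanningTree

open SimpleGraph Walk in
theorem exists_spanning_tree_plus_edge {V : Type*} [Fintype V] (G : SimpleGraph V)
    (hconn : G.Connected) (hnb : ¬ G.Colorable 2)
    (U : Set V) (hU : IsDominatingSet G U)
    (hcard : U.ncard = dominationNumber G) (h2 : 2 ≤ dominationNumber G) :
    ∃ T : SimpleGraph V, T ≤ G ∧ T.Connected ∧ T.IsAcyclic ∧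
      ∃ e ∈ G.edgeSet \ T.edgeSet,
        (T ⊔ SimpleGraph.fromEdgeSet {e}).Connected ∧
        ¬ (T ⊔ SimpleGraph.fromEdgeSet {e}).Colorable 2 ∧
        (T ⊔ SimpleGraph.fromEdgeSet {e}).edgeSet.ncard = Fintype.card V := by
  classical
  obtain ⟨T, hTle, hTtree⟩ := aux_tree G.edgeSet.ncard G (le_refl _) hconn
  obtain ⟨c₀⟩ := aux_tree_coloring hTtree
  -- find a G-edge monochromatic under c₀
  have hbad : ∃ u v, G.Adj u v ∧ c₀ u = c₀ v := by
    by_contra hno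
    push_neg at hno
    exact hnb ⟨Coloring.mk c₀ fun {u v} h => hno u v h⟩
  obtain ⟨u, v, huv, hmono⟩ := hbad
  have hune : u ≠ v := huv.ne
  set e : Sym2 V := s(u, v) with he
  have heG : e ∈ G.edgeSet := G.mem_edgeSet.mpr huv
  have heT : e ∉ T.edgeSet := fun h => c₀.valid (T.mem_edgeSet.mp h) hmono
  set H : SimpleGraph V := T ⊔ SimpleGraph.fromEdgeSet {e} with hH
  have hfromle : SimpleGraph.fromEdgeSet {e} ≤ G := by
    intro a b hab
    rw [fromEdgeSet_adj] at hab
    rcases hab with ⟨hmem, -⟩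
    rw [Set.mem_singleton_iff] at hmem
    rw [← G.mem_edgeSet, hmem]; exact heG
  have hHle : H ≤ G := sup_le hTle hfromle
  have hHconn : H.Connected := hTtree.isConnected.mono le_sup_left
  refine ⟨T, hTle, hTtree.isConnected, hTtree.IsAcyclic, e, ⟨heG, heT⟩, hHconn, ?_, ?_⟩
  · -- not 2-colorable
    rintro ⟨c⟩
    obtain ⟨p⟩ := hTtree.isConnected.preconnected u v
    have hplen : Even p.length := (aux_parity c₀ p).mp hmono
    have h1 : c u = c v := (aux_parity c (p.mapLe (le_sup_left : T ≤ H))).mpr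
      (by rwa [Walk.mapLe, Walk.length_map])
    have hHadj : H.Adj u v := by
      refine Or.inr ?_
      rw [fromEdgeSet_adj]
      exact ⟨Set.mem_singleton _, hune⟩
    exact c.valid hHadj h1
  · -- edge count
    have hEdges : H.edgeSet = insert e T.edgeSet := by
      rw [hH, edgeSet_sup, edgeSet_fromEdgeSet]
      have : ({e} : Set (Sym2 V)) \ {e' | e'.IsDiag} = {e} := by
        ext x
        simp only [Set.mem_diff, Set.mem_singleton_iff, Set.mem_setOf_eq]
        constructor
        · exact fun h => h.1
        · rintro rfl
          exact ⟨rfl, by simp [he, Sym2.isDiag_iff_proj_eq, hune]⟩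
      rw [show (Sym2.diagSet : Set (Sym2 V)) = {e' | e'.IsDiag} by ext; simp, this, Set.union_singleton]
    have hcardT : T.edgeSet.ncard + 1 = Fintype.card V := by
      have := hTtree.card_edgeFinset
      rwa [Set.ncard_eq_toFinset_card', Set.toFinset_card, ← edgeFinset_card]
    rw [hEdges, Set.ncard_insert_of_notMem heT (Set.toFinite _), hcardT]
end
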